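/- Let f : ℝⁿ → ℝⁿ be continuously differentiable with Jacobian Df(x), let λ ≥ 0, ε ≥ 0, and let P be a real symmetric n×n matrix such that Df(x)ᵀP + P·Df(x) ⪯ −2λP − εI for all x ∈ ℝⁿ. Let x, y : [0,∞) → ℝⁿ be differentiable with x′(t) = f(x(t)) and y′(t) = f(y(t)) for all t ≥ 0. Then for every t ≥ 0: e^(2λt)·V(x(t)−y(t)) ≤ V(x(0)−y(0)) − ε·∫₀ᵗ e^(2λτ)·|x(τ)−y(τ)|² dτ, where V(z) = zᵀPz. -/

import Mathlib

open Matrix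

/-- `M ⪯ N` iff `N - M` is positive semidefinite. -/
def matLE {m : Type*} [Fintype m] (M N : Matrix m m ℝ) : Prop := (N - M).PosSemidef

/-- A real symmetric matrix has inertia `p`: exactly `p` negative eigenvalues,
`card m − p` positive eigenvalues, and no zero eigenvalues, counted with multiplicity
(as roots of the characteristic polynomial). -/
def hasInertia {m : Type*} [Fintype m] [DecidableEq m]
    (P : Matrix m m ℝ) (p : ℕ) : Prop :=
  Multiset.countP (fun μ : ℝ => μ < 0) P.charpoly.roots = p ∧
  Multiset.countP (fun μ : ℝ => 0 < μ) P.charpoly.roots = Fintype.card m - p ∧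
  (0 : ℝ) ∉ P.charpoly.roots

/-- Number of complex eigenvalues (with algebraic multiplicity) of a real matrix
with strictly positive real part. -/
noncomputable def posReCount {m : Type*} [Fintype m] [DecidableEq m]
    (A : Matrix m m ℝ) : ℕ :=
  Multiset.countP (fun μ : ℂ => 0 < μ.re) (A.map Complex.ofReal).charpoly.roots

/-- Number of complex eigenvalues (with algebraic multiplicity) of a real matrix
with strictly negative real part. -/
noncomputable def negReCount {m : Type*} [Fintype m] [DecidableEq m]
    (A : Matrix m m ℝ) : ℕ :=
  Multiset.countP (fun μ : ℂ => μ.re < 0) (A.map Complex.ofReal).charpoly.roots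

/-- The quadratic form `xᵀ P x`. -/
def quadForm {m : Type*} [Fintype m] (P : Matrix m m ℝ) (x : m → ℝ) : ℝ :=
  x ⬝ᵥ P.mulVec x

/-- Euclidean norm on `m → ℝ`. -/
noncomputable def enorm {m : Type*} [Fintype m] (x : m → ℝ) : ℝ :=
  Real.sqrt (x ⬝ᵥ x)

/-- `J` is the Jacobian of `f`. -/
def IsJacobianOf {n : ℕ} (J : (Fin n → ℝ) → Matrix (Fin n) (Fin n) ℝ)
    (f : (Fin n → ℝ) → (Fin n → ℝ)) : Prop :=
  ∀ x, HasFDerivAt f (LinearMap.toContinuousLinearMap ((J x).mulVecLin)) x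

lemma dot_symm {n : ℕ} {P : Matrix (Fin n) (Fin n) ℝ} (hPsymm : P.IsSymm) (u v : Fin n → ℝ) :
    u ⬝ᵥ P.mulVec v = v ⬝ᵥ P.mulVec u := by
  conv_lhs => rw [← hPsymm.eq]
  rw [dotProduct_mulVec, vecMul_transpose, dotProduct_comm]

lemma lmi_key {n : ℕ} (P A : Matrix (Fin n) (Fin n) ℝ) (hPsymm : P.IsSymm) (lam eps : ℝ)
    (h : (-((2 * lam) • P) - eps • (1 : Matrix (Fin n) (Fin n) ℝ) - (Aᵀ * P + P * A)).PosSemidef)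
    (z : Fin n → ℝ) :
    2 * (z ⬝ᵥ P.mulVec (A.mulVec z)) ≤ -(2*lam) * (z ⬝ᵥ P.mulVec z) - eps * (z ⬝ᵥ z) := by
  have h2 := h.dotProduct_mulVec_nonneg z
  simp only [sub_mulVec, add_mulVec, neg_mulVec, smul_mulVec, one_mulVec,
    dotProduct_sub, dotProduct_add, dotProduct_neg, dotProduct_smul, ← mulVec_mulVec,
    star_trivial, smul_eq_mul] at h2
  have hT : z ⬝ᵥ Aᵀ *ᵥ P *ᵥ z = z ⬝ᵥ P *ᵥ A *ᵥ z := by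
    rw [dotProduct_mulVec z Aᵀ, vecMul_transpose, dotProduct_mulVec z P]
    conv_rhs => rw [← hPsymm.eq, vecMul_transpose]
    rw [dotProduct_comm]
  rw [hT] at h2
  linarith

lemma dot_hasDerivAt {n : ℕ} {u v : ℝ → Fin n → ℝ} {u' v' : Fin n → ℝ} {t : ℝ}
    (hu : HasDerivAt u u' t) (hv : HasDerivAt v v' t) :
    HasDerivAt (fun s => u s ⬝ᵥ v s) (u' ⬝ᵥ v t + u t ⬝ᵥ v') t := by
  simp only [dotProduct]
  rw [← Finset.sum_add_distrib]
  exact HasDerivAt.fun_sum fun i _ => (hasDerivAt_pi.mp hu i).fun_mul (hasDerivAt_pi.mp hv i)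

lemma mulVec_hasDerivAt {n : ℕ} {u : ℝ → Fin n → ℝ} {u' : Fin n → ℝ} {t : ℝ}
    (P : Matrix (Fin n) (Fin n) ℝ) (hu : HasDerivAt u u' t) :
    HasDerivAt (fun s => P.mulVec (u s)) (P.mulVec u') t := by
  rw [hasDerivAt_pi]
  intro i
  simp only [mulVec, dotProduct]
  exact HasDerivAt.fun_sum fun j _ => (hasDerivAt_pi.mp hu j).const_mul _

lemma increment_key {n : ℕ}
    (f : (Fin n → ℝ) → (Fin n → ℝ)) (J : (Fin n → ℝ) → Matrix (Fin n) (Fin n) ℝ)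
    (hJ : ∀ x, HasFDerivAt f (LinearMap.toContinuousLinearMap ((J x).mulVecLin)) x)
    (P : Matrix (Fin n) (Fin n) ℝ) (hPsymm : P.IsSymm) (lam eps : ℝ)
    (hLMI : ∀ w : Fin n → ℝ, (-((2 * lam) • P) - eps • (1 : Matrix (Fin n) (Fin n) ℝ)
      - ((J w)ᵀ * P + P * J w)).PosSemidef)
    (a b : Fin n → ℝ) :
    2 * ((a - b) ⬝ᵥ P.mulVec (f a - f b)) ≤
      -(2*lam) * ((a - b) ⬝ᵥ P.mulVec (a - b)) - eps * ((a - b) ⬝ᵥ (a - b)) := by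
  set z := a - b with hz
  set φ : ℝ → ℝ := fun s => 2 * (z ⬝ᵥ P.mulVec (f (b + s • z)))
      + s * ((2*lam) * (z ⬝ᵥ P.mulVec z) + eps * (z ⬝ᵥ z)) with hφ
  have hd : ∀ s : ℝ, HasDerivAt φ
      (2 * (z ⬝ᵥ P.mulVec ((J (b + s • z)).mulVec z))
        + ((2*lam) * (z ⬝ᵥ P.mulVec z) + eps * (z ⬝ᵥ z))) s := by
    intro s
    have hcurve : HasDerivAt (fun s : ℝ => b + s • z) z s := by
      simpa using ((hasDerivAt_id s).smul_const z).const_add b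
    have hfc : HasDerivAt (fun s : ℝ => f (b + s • z)) ((J (b + s • z)).mulVec z) s := by
      have := (hJ (b + s • z)).comp_hasDerivAt s hcurve
      simpa [Function.comp_def] using this
    have h1 : HasDerivAt (fun s : ℝ => z ⬝ᵥ P.mulVec (f (b + s • z)))
        (z ⬝ᵥ P.mulVec ((J (b + s • z)).mulVec z)) s := by
      have := dot_hasDerivAt (hasDerivAt_const s z) (mulVec_hasDerivAt P hfc)
      simpa using this
    simpa only [hφ, one_mul, id_eq] using (h1.const_mul 2).fun_add
      ((hasDerivAt_id s).mul_const ((2*lam) * (z ⬝ᵥ P.mulVec z) + eps * (z ⬝ᵥ z)))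
  have hanti : Antitone φ := by
    apply antitone_of_deriv_nonpos
    · exact fun s => ((hd s).differentiableAt)
    · intro s
      rw [(hd s).deriv]
      have := lmi_key P (J (b + s • z)) hPsymm lam eps (hLMI (b + s • z)) z
      linarith
  have h10 := hanti (by norm_num : (0:ℝ) ≤ 1)
  have h10' : 2 * (z ⬝ᵥ P.mulVec (f (b + z))) + ((2*lam) * (z ⬝ᵥ P.mulVec z) + eps * (z ⬝ᵥ z))
      ≤ 2 * (z ⬝ᵥ P.mulVec (f b)) := by
    simpa [hφ] using h10
  clear h10
  have h10 := h10'
  have hbz : b + z = a := by simp [hz]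
  rw [hbz] at h10
  have : z ⬝ᵥ P.mulVec (f a - f b) = z ⬝ᵥ P.mulVec (f a) - z ⬝ᵥ P.mulVec (f b) := by
    simp [Matrix.mulVec_sub, dotProduct_sub]
  linarith

/-- integral dissipation estimate for the difference of two solutions. -/
theorem incremental_integral_estimate {n : ℕ}
    (f : (Fin n → ℝ) → (Fin n → ℝ)) (J : (Fin n → ℝ) → Matrix (Fin n) (Fin n) ℝ)
    (hf : ContDiff ℝ 1 f) (hJ : IsJacobianOf J f)
    (P : Matrix (Fin n) (Fin n) ℝ) (hPsymm : P.IsSymm)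
    (lam eps : ℝ) (hlam : 0 ≤ lam) (heps : 0 ≤ eps)
    (hLMI : ∀ x : Fin n → ℝ, matLE ((J x)ᵀ * P + P * J x)
      (-((2 * lam) • P) - eps • (1 : Matrix (Fin n) (Fin n) ℝ)))
    (x y : ℝ → Fin n → ℝ)
    (hx : ∀ t : ℝ, 0 ≤ t → HasDerivAt x (f (x t)) t)
    (hy : ∀ t : ℝ, 0 ≤ t → HasDerivAt y (f (y t)) t) :
    ∀ t : ℝ, 0 ≤ t →
      Real.exp (2 * lam * t) * quadForm P (x t - y t)
        ≤ quadForm P (x 0 - y 0)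
          - eps * ∫ τ in (0:ℝ)..t, Real.exp (2 * lam * τ) * ((x τ - y τ) ⬝ᵥ (x τ - y τ)) := by
  intro t ht
  set z : ℝ → Fin n → ℝ := fun s => x s - y s with hzdef
  have hzderiv : ∀ s : ℝ, 0 ≤ s → HasDerivAt z (f (x s) - f (y s)) s :=
    fun s hs => (hx s hs).sub (hy s hs)
  set h : ℝ → ℝ := fun τ => Real.exp (2 * lam * τ) * (z τ ⬝ᵥ z τ) with hhdef
  have hcontz : ∀ s : ℝ, 0 ≤ s → ContinuousAt z s := fun s hs =>
    (hzderiv s hs).continuousAt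
  have hdotCA : ∀ (u v : ℝ → Fin n → ℝ) (s : ℝ), ContinuousAt u s → ContinuousAt v s →
      ContinuousAt (fun τ => u τ ⬝ᵥ v τ) s := by
    intro u v s hu hv
    simp only [dotProduct]
    exact tendsto_finset_sum _ fun i _ =>
      (((continuous_apply i).continuousAt).comp hu).mul (((continuous_apply i).continuousAt).comp hv)
  have hmvCA : ∀ (u : ℝ → Fin n → ℝ) (s : ℝ), ContinuousAt u s →
      ContinuousAt (fun τ => P.mulVec (u τ)) s := by
    intro u s hu
    rw [continuousAt_pi]
    intro i
    simp only [mulVec, dotProduct]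
    exact tendsto_finset_sum _ fun j _ =>
      continuousAt_const.mul (((continuous_apply j).continuousAt).comp hu)
  have hexpCA : ∀ s : ℝ, ContinuousAt (fun τ => Real.exp (2 * lam * τ)) s := fun s =>
    (Real.continuous_exp.comp (continuous_const.mul continuous_id)).continuousAt
  have hconth : ∀ s : ℝ, 0 ≤ s → ContinuousAt h s := fun s hs =>
    (hexpCA s).mul (hdotCA z z s (hcontz s hs) (hcontz s hs))
  have hVCA : ∀ s : ℝ, 0 ≤ s → ContinuousAt (fun τ => z τ ⬝ᵥ P.mulVec (z τ)) s := fun s hs =>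
    hdotCA z (fun τ => P.mulVec (z τ)) s (hcontz s hs) (hmvCA z s (hcontz s hs))
  -- interval integrability of h on [0, s] for 0 ≤ s ≤ t
  have hint : ∀ s : ℝ, 0 ≤ s → IntervalIntegrable h MeasureTheory.volume 0 s := by
    intro s hs
    apply ContinuousOn.intervalIntegrable
    intro τ hτ
    rw [Set.uIcc_of_le hs] at hτ
    exact (hconth τ hτ.1).continuousWithinAt
  set g : ℝ → ℝ := fun s => Real.exp (2 * lam * s) * (z s ⬝ᵥ P.mulVec (z s))
      + eps * ∫ τ in (0:ℝ)..s, h τ with hgdef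
  -- g is continuous on [0, t]
  have hgcont : ContinuousOn g (Set.Icc 0 t) := by
    apply ContinuousOn.add
    · intro s hs
      exact ((hexpCA s).mul (hVCA s hs.1)).continuousWithinAt
    · have hp := intervalIntegral.continuousOn_primitive_interval' (hint t ht)
        (Set.left_mem_uIcc)
      rw [Set.uIcc_of_le ht] at hp
      exact continuousOn_const.mul hp
  -- derivative of g on the interior
  have hgderiv : ∀ s : ℝ, s ∈ Set.Ioo 0 t → HasDerivAt g
      (2 * lam * Real.exp (2 * lam * s) * (z s ⬝ᵥ P.mulVec (z s))
        + Real.exp (2 * lam * s) *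
          ((f (x s) - f (y s)) ⬝ᵥ P.mulVec (z s) + z s ⬝ᵥ P.mulVec (f (x s) - f (y s)))
        + eps * h s) s := by
    intro s hs
    have hE : HasDerivAt (fun τ => Real.exp (2 * lam * τ))
        (2 * lam * Real.exp (2 * lam * s)) s := by
      simpa [mul_comm] using ((hasDerivAt_id s).const_mul (2 * lam)).exp
    have hV : HasDerivAt (fun τ => z τ ⬝ᵥ P.mulVec (z τ))
        ((f (x s) - f (y s)) ⬝ᵥ P.mulVec (z s) + z s ⬝ᵥ P.mulVec (f (x s) - f (y s))) s :=
      dot_hasDerivAt (hzderiv s hs.1.le) (mulVec_hasDerivAt P (hzderiv s hs.1.le))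
    have hmeasF : StronglyMeasurableAtFilter h (nhds s) MeasureTheory.volume := by
      refine AEStronglyMeasurable.stronglyMeasurableAtFilter_of_mem
        (ContinuousOn.aestronglyMeasurable (fun τ hτ => (hconth τ (le_of_lt hτ)).continuousWithinAt)
          measurableSet_Ioi) (Ioi_mem_nhds hs.1)
    have hI : HasDerivAt (fun u => ∫ τ in (0:ℝ)..u, h τ) (h s) s :=
      intervalIntegral.integral_hasDerivAt_right (hint s hs.1.le) hmeasF (hconth s hs.1.le)
    simpa [hgdef, mul_comm, mul_assoc, mul_left_comm] using (hE.fun_mul hV).fun_add (hI.const_mul eps)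
  -- deriv g ≤ 0 on the interior
  have hderiv_nonpos : ∀ s ∈ interior (Set.Icc (0:ℝ) t), deriv g s ≤ 0 := by
    rw [interior_Icc]
    intro s hs
    rw [(hgderiv s hs).deriv]
    have hkey := increment_key f J hJ P hPsymm lam eps
      (fun w => hLMI w) (x s) (y s)
    have hzz : x s - y s = z s := rfl
    rw [hzz] at hkey
    have hsym : (f (x s) - f (y s)) ⬝ᵥ P.mulVec (z s) = z s ⬝ᵥ P.mulVec (f (x s) - f (y s)) :=
      dot_symm hPsymm _ _
    have hEpos : (0:ℝ) < Real.exp (2 * lam * s) := Real.exp_pos _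
    have hmul : Real.exp (2 * lam * s) * (2 * (z s ⬝ᵥ P.mulVec (f (x s) - f (y s))))
        ≤ Real.exp (2 * lam * s) *
          (-(2 * lam) * (z s ⬝ᵥ P.mulVec (z s)) - eps * (z s ⬝ᵥ z s)) :=
      mul_le_mul_of_nonneg_left hkey hEpos.le
    simp only [hhdef]
    nlinarith [hmul, hsym]
  -- antitone on [0, t]
  have hanti : AntitoneOn g (Set.Icc 0 t) := by
    apply antitoneOn_of_deriv_nonpos (convex_Icc 0 t) hgcont
    · rw [interior_Icc]
      intro s hs
      exact ((hgderiv s hs).differentiableAt).differentiableWithinAt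
    · exact hderiv_nonpos
  have hfin : g t ≤ g 0 :=
    hanti (Set.left_mem_Icc.mpr ht) (Set.right_mem_Icc.mpr ht) ht
  simp only [hgdef, hhdef, intervalIntegral.integral_same, mul_zero, add_zero,
    Real.exp_zero, one_mul] at hfin
  simp only [quadForm, hhdef]
  have h0 : z 0 = x 0 - y 0 := rfl
  have hT : z t = x t - y t := rfl
  rw [← h0, ← hT]
  linarith [hfin]
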